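/- Let s ∈ (0,1) be real and p ∈ ℝ with p ≠ 0. Then the improper integral lim_{T→∞} ∫_{−T}^{T} |x|^{−s} e^{ipx} dx exists and equals 2^{1−s} √π · ( Γ((1−s)/2) / Γ(s/2) ) · |p|^{s−1}. -/

import Mathlib

section AuxStmt5

open Topology MeasureTheory Real Set Filter intervalIntegral

/-- integrability of `t^(s-1) e^{-rt}` on `(0,∞)` -/
lemma aux_gammaKernel_integrable {s r : ℝ} (hs : 0 < s) (hr : 0 < r) :
    IntegrableOn (fun t : ℝ => t ^ (s - 1) * Real.exp (-(r * t))) (Ioi (0:ℝ)) := by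
  have h := Real.GammaIntegral_convergent hs
  have h2 : IntegrableOn (fun t : ℝ => Real.exp (-(r*t)) * (r*t) ^ (s-1)) (Ioi (0:ℝ)) := by
    have := (integrableOn_Ioi_comp_mul_left_iff
      (fun x : ℝ => Real.exp (-x) * x ^ (s-1)) 0 hr).mpr
    simpa using this (by simpa using h)
  have h3 := h2.const_mul (r ^ (1 - s))
  apply IntegrableOn.congr_fun h3 ?_ measurableSet_Ioi
  intro t ht
  rw [mem_Ioi] at ht
  simp only
  rw [Real.mul_rpow hr.le ht.le, show (1:ℝ) - s = -(s-1) by ring, Real.rpow_neg hr.le]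
  field_simp [(Real.rpow_pos_of_pos hr (s-1)).ne']

/-- Laplace transform of cosine, partial integral -/
lemma aux_laplace_cos (t q : ℝ) (ht : 0 < t) (T : ℝ) :
    ∫ x in (0:ℝ)..T, Real.exp (-(x*t)) * Real.cos (q*x)
      = (t + Real.exp (-(T*t)) * (q * Real.sin (q*T) - t * Real.cos (q*T))) / (t^2 + q^2) := by
  have htq : t^2 + q^2 ≠ 0 := by positivity
  have hder : ∀ x : ℝ, HasDerivAt
      (fun x => Real.exp (-(x*t)) * (q * Real.sin (q*x) - t * Real.cos (q*x)) / (t^2 + q^2))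
      (Real.exp (-(x*t)) * Real.cos (q*x)) x := by
    intro x
    have h1 : HasDerivAt (fun x : ℝ => -(x*t)) (-t) x := by
      simpa using ((hasDerivAt_id x).mul_const t).fun_neg
    have he : HasDerivAt (fun x => Real.exp (-(x*t))) (Real.exp (-(x*t)) * (-t)) x := h1.exp
    have hq1 : HasDerivAt (fun x : ℝ => q*x) q x := by simpa using (hasDerivAt_id x).const_mul q
    have hsin : HasDerivAt (fun x => Real.sin (q*x)) (Real.cos (q*x) * q) x := hq1.sin
    have hcos : HasDerivAt (fun x => Real.cos (q*x)) (-Real.sin (q*x) * q) x := hq1.cos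
    have hin : HasDerivAt (fun x => q * Real.sin (q*x) - t * Real.cos (q*x))
        (q * (Real.cos (q*x) * q) - t * (-Real.sin (q*x) * q)) x :=
      (hsin.const_mul q).sub (hcos.const_mul t)
    have := (he.fun_mul hin).div_const (t^2 + q^2)
    refine this.congr_deriv ?_
    rw [div_eq_iff htq]
    ring
  have : ∫ x in (0:ℝ)..T, Real.exp (-(x*t)) * Real.cos (q*x)
      = (fun x => Real.exp (-(x*t)) * (q * Real.sin (q*x) - t * Real.cos (q*x)) / (t^2 + q^2)) T
        - (fun x => Real.exp (-(x*t)) * (q * Real.sin (q*x) - t * Real.cos (q*x)) / (t^2 + q^2)) 0 := by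
    refine integral_eq_sub_of_hasDerivAt (fun x _ => hder x) ?_
    apply Continuous.intervalIntegrable
    continuity
  rw [this]
  simp
  field_simp
  ring

lemma aux_fubini {s : ℝ} (hs0 : 0 < s) (hs1 : s < 1) (q : ℝ) {T : ℝ} (hT : 0 < T) :
    ∫ x in Ioc (0:ℝ) T, x ^ (-s) * Real.cos (q*x)
      = (Real.Gamma s)⁻¹ * ∫ t in Ioi (0:ℝ), t ^ (s-1) *
          ((t + Real.exp (-(T*t)) * (q * Real.sin (q*T) - t * Real.cos (q*T))) / (t^2 + q^2)) := by
  have hΓ : (0:ℝ) < Real.Gamma s := Real.Gamma_pos_of_pos hs0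
  set K : ℝ → ℝ := fun t => Real.exp ((s-1) * Real.log t) with hK
  have hKt : ∀ t : ℝ, 0 < t → K t = t ^ (s-1) := by
    intro t ht
    rw [hK, Real.rpow_def_of_pos ht, mul_comm]
  set F : ℝ → ℝ → ℝ := fun x t => Real.cos (q*x) * (K t * Real.exp (-(x*t))) with hF
  -- slice integrability for x > 0
  have hslice : ∀ x : ℝ, 0 < x → IntegrableOn (F x) (Ioi (0:ℝ)) := by
    intro x hx
    apply IntegrableOn.congr_fun ((aux_gammaKernel_integrable hs0 hx).const_mul (Real.cos (q*x)))
      ?_ measurableSet_Ioi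
    intro t ht
    rw [mem_Ioi] at ht
    simp only [hF]
    rw [hKt t ht, mul_comm x t]
  -- value of the slice integral of the kernel
  have hkv : ∀ x : ℝ, 0 < x → ∫ t in Ioi (0:ℝ), K t * Real.exp (-(x*t)) = x ^ (-s) * Real.Gamma s := by
    intro x hx
    have := Real.integral_rpow_mul_exp_neg_mul_Ioi hs0 hx
    have h2 : ∫ t in Ioi (0:ℝ), K t * Real.exp (-(x*t))
        = ∫ t in Ioi (0:ℝ), t ^ (s-1) * Real.exp (-(x*t)) := by
      apply setIntegral_congr_fun measurableSet_Ioi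
      intro t ht
      rw [mem_Ioi] at ht
      simp only [hKt t ht]
    rw [h2, this, one_div, Real.inv_rpow hx.le, ← Real.rpow_neg hx.le]
  -- measurability on the product
  have hmeas : AEStronglyMeasurable (Function.uncurry F)
      ((volume.restrict (Ioc (0:ℝ) T)).prod (volume.restrict (Ioi (0:ℝ)))) := by
    apply Measurable.aestronglyMeasurable
    apply Measurable.mul
    · exact Real.measurable_cos.comp (measurable_fst.const_mul q)
    · exact ((Real.measurable_log.comp measurable_snd).const_mul (s-1)).exp.mul
        (((measurable_fst.mul measurable_snd).neg).exp)
  -- product integrability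
  have hprod : Integrable (Function.uncurry F)
      ((volume.restrict (Ioc (0:ℝ) T)).prod (volume.restrict (Ioi (0:ℝ)))) := by
    rw [integrable_prod_iff hmeas]
    constructor
    · filter_upwards [ae_restrict_mem measurableSet_Ioc] with x hx
      exact hslice x hx.1
    · -- integral of norms is dominated by Γ(s) * x^(-s)
      have hbd : ∀ x ∈ Ioc (0:ℝ) T,
          ‖∫ t in Ioi (0:ℝ), ‖F x t‖‖ ≤ x ^ (-s) * Real.Gamma s := by
        intro x hx
        have h1 : (0:ℝ) ≤ ∫ t in Ioi (0:ℝ), ‖F x t‖ :=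
          integral_nonneg fun t => norm_nonneg _
        rw [Real.norm_eq_abs, abs_of_nonneg h1]
        have h2 : ∫ t in Ioi (0:ℝ), ‖F x t‖ ≤ ∫ t in Ioi (0:ℝ), K t * Real.exp (-(x*t)) := by
          apply setIntegral_mono_on ((hslice x hx.1).norm) ?_ measurableSet_Ioi
          · intro t ht
            rw [hF, Real.norm_eq_abs, abs_mul]
            have hKpos : 0 < K t * Real.exp (-(x*t)) := by positivity
            calc |Real.cos (q*x)| * |K t * Real.exp (-(x*t))|
                ≤ 1 * |K t * Real.exp (-(x*t))| := by
                  apply mul_le_mul_of_nonneg_right (Real.abs_cos_le_one _) (abs_nonneg _)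
              _ = K t * Real.exp (-(x*t)) := by rw [one_mul, abs_of_pos hKpos]
          · apply IntegrableOn.congr_fun (aux_gammaKernel_integrable hs0 hx.1) ?_
              measurableSet_Ioi
            intro t ht
            rw [mem_Ioi] at ht
            simp only [hKt t ht, mul_comm x t]
        rw [hkv x hx.1] at h2
        exact h2
      have hg : IntegrableOn (fun x : ℝ => x ^ (-s) * Real.Gamma s) (Ioc (0:ℝ) T) := by
        have := (intervalIntegrable_rpow' (show (-1:ℝ) < -s by linarith) (a := 0) (b := T))
        rw [intervalIntegrable_iff_integrableOn_Ioc_of_le hT.le] at this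
        exact this.mul_const _
      apply Integrable.mono' hg
      · exact hmeas.norm.integral_prod_right'
      · filter_upwards [ae_restrict_mem measurableSet_Ioc] with x hx
        exact hbd x hx
  -- now swap
  have hswap := integral_integral_swap hprod
  -- LHS: rewrite integrand
  have hlhs : ∫ x in Ioc (0:ℝ) T, x ^ (-s) * Real.cos (q*x)
      = ∫ x in Ioc (0:ℝ) T, (Real.Gamma s)⁻¹ * ∫ t in Ioi (0:ℝ), F x t := by
    apply setIntegral_congr_fun measurableSet_Ioc
    intro x hx
    have : ∫ t in Ioi (0:ℝ), F x t
        = Real.cos (q*x) * ∫ t in Ioi (0:ℝ), K t * Real.exp (-(x*t)) := by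
      rw [← MeasureTheory.integral_const_mul]
    simp only
    rw [this, hkv x hx.1]
    field_simp
  rw [hlhs, MeasureTheory.integral_const_mul, hswap]
  congr 1
  apply setIntegral_congr_fun measurableSet_Ioi
  intro t ht
  rw [mem_Ioi] at ht
  have h1 : ∫ x in Ioc (0:ℝ) T, F x t
      = K t * ∫ x in Ioc (0:ℝ) T, Real.exp (-(x*t)) * Real.cos (q*x) := by
    rw [← MeasureTheory.integral_const_mul]
    apply setIntegral_congr_fun measurableSet_Ioc
    intro x _
    simp only [hF]
    ring
  simp only
  rw [h1, ← intervalIntegral.integral_of_le hT.le, aux_laplace_cos t q ht T, hKt t ht]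

/-- Real Beta value with a + b = 1 -/
lemma aux_beta_real {a b : ℝ} (ha : 0 < a) (hb : 0 < b) (hab : a + b = 1) :
    ∫ x in (0:ℝ)..1, x ^ (a-1) * (1-x) ^ (b-1) = Real.Gamma a * Real.Gamma b := by
  have h := Complex.Gamma_mul_Gamma_eq_betaIntegral
    (show 0 < (a:ℂ).re by simpa using ha) (show 0 < (b:ℂ).re by simpa using hb)
  have hab' : (a:ℂ) + b = 1 := by
    rw [← Complex.ofReal_add, hab, Complex.ofReal_one]
  rw [hab', Complex.Gamma_one, one_mul] at h
  have hcast : Complex.betaIntegral a b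
      = ((∫ x in (0:ℝ)..1, x ^ (a-1) * (1-x) ^ (b-1) : ℝ) : ℂ) := by
    rw [Complex.betaIntegral, ← intervalIntegral.integral_ofReal]
    apply intervalIntegral.integral_congr
    intro x hx
    rw [uIcc_of_le zero_le_one] at hx
    simp only
    rw [show ((a:ℂ)-1) = ((a-1:ℝ):ℂ) by push_cast; ring,
      show ((b:ℂ)-1) = ((b-1:ℝ):ℂ) by push_cast; ring,
      show (1 - (x:ℂ)) = ((1-x:ℝ):ℂ) by push_cast; ring,
      ← Complex.ofReal_cpow hx.1, ← Complex.ofReal_cpow (by linarith [hx.2] : (0:ℝ) ≤ 1 - x),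
      ← Complex.ofReal_mul]
  rw [hcast] at h
  have := h.symm
  rw [Complex.Gamma_ofReal, Complex.Gamma_ofReal, ← Complex.ofReal_mul] at this
  exact_mod_cast this

lemma aux_I1 {s : ℝ} (hs0 : 0 < s) (hs1 : s < 1) :
    ∫ t in Ioi (0:ℝ), t ^ s / (1 + t^2)
      = Real.Gamma ((1+s)/2) * Real.Gamma ((1-s)/2) / 2 := by
  set a : ℝ := (1+s)/2
  set b : ℝ := (1-s)/2
  have ha : 0 < a := by unfold a; linarith
  have hb : 0 < b := by unfold b; linarith
  have hab : a + b = 1 := by unfold a b; ring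
  set f : ℝ → ℝ := fun t => t^2 / (1 + t^2) with hf
  set f' : ℝ → ℝ := fun t => 2*t / (1 + t^2)^2 with hf'
  have hden : ∀ t : ℝ, (0:ℝ) < 1 + t^2 := fun t => by positivity
  have hder : ∀ t ∈ Ioi (0:ℝ), HasDerivWithinAt f (f' t) (Ioi 0) t := by
    intro t _
    have h1 : HasDerivAt (fun t : ℝ => t^2) (2*t) t := by
      simpa using hasDerivAt_pow 2 t
    have h2 : HasDerivAt (fun t : ℝ => 1 + t^2) (2*t) t := by
      simpa using h1.const_add 1
    have := h1.div h2 (hden t).ne'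
    apply HasDerivAt.hasDerivWithinAt
    refine this.congr_deriv ?_
    unfold f'
    field_simp
    ring
  have hinj : InjOn f (Ioi (0:ℝ)) := by
    intro t ht u hu h
    rw [mem_Ioi] at ht hu
    unfold f at h
    rw [div_eq_div_iff (hden t).ne' (hden u).ne'] at h
    have h2 : t^2 = u^2 := by nlinarith
    nlinarith
  have himg : f '' Ioi (0:ℝ) = Ioo (0:ℝ) 1 := by
    ext y
    constructor
    · rintro ⟨t, ht, rfl⟩
      rw [mem_Ioi] at ht
      constructor
      · positivity
      · rw [div_lt_one (hden t)]; nlinarith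
    · rintro ⟨hy0, hy1⟩
      refine ⟨Real.sqrt (y/(1-y)), ?_, ?_⟩
      · rw [mem_Ioi]
        apply Real.sqrt_pos.mpr
        apply div_pos hy0 (by linarith)
      · show Real.sqrt (y/(1-y)) ^ 2 / (1 + Real.sqrt (y/(1-y)) ^ 2) = y
        rw [Real.sq_sqrt (le_of_lt (div_pos hy0 (by linarith)))]
        have hy : (1:ℝ) - y ≠ 0 := by linarith
        field_simp
        ring
  have hcv := integral_image_eq_integral_abs_deriv_smul measurableSet_Ioi hder hinj
    (fun x => x ^ (a-1) * (1-x) ^ (b-1))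
  rw [himg] at hcv
  -- LHS of hcv is the beta integral
  have hbeta : ∫ x in Ioo (0:ℝ) 1, x ^ (a-1) * (1-x) ^ (b-1)
      = Real.Gamma a * Real.Gamma b := by
    rw [← aux_beta_real ha hb hab, intervalIntegral.integral_of_le zero_le_one,
      ← integral_Ioc_eq_integral_Ioo]
  -- RHS of hcv: simplify integrand
  have hrhs : ∫ t in Ioi (0:ℝ), |f' t| • ((f t) ^ (a-1) * (1 - f t) ^ (b-1))
      = ∫ t in Ioi (0:ℝ), 2 * (t ^ s / (1 + t^2)) := by
    apply setIntegral_congr_fun measurableSet_Ioi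
    intro t ht
    rw [mem_Ioi] at ht
    have h1t : (0:ℝ) < 1 + t^2 := hden t
    have hft : 1 - f t = 1 / (1 + t^2) := by
      unfold f; field_simp; ring
    have hfpos : 0 ≤ f' t := by
      unfold f'; positivity
    simp only [smul_eq_mul]
    rw [abs_of_nonneg hfpos, hft]
    have h1t' : (1+t^2:ℝ) ≠ 0 := h1t.ne'
    have h2a : ((t:ℝ)^2) ^ (a-1) = t ^ (s-1) := by
      rw [← Real.rpow_natCast t 2, ← Real.rpow_mul ht.le]
      norm_num
      congr 1
      unfold a
      ring
    have hts : t * t^(s-1) = t^s := by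
      rw [mul_comm, ← Real.rpow_add_one ht.ne' (s-1)]
      norm_num
    have e1 : ((t^2:ℝ)/(1+t^2)) ^ (a-1) = t^(s-1) * ((1+t^2) ^ (a-1))⁻¹ := by
      rw [Real.div_rpow (by positivity) h1t.le, h2a, div_eq_mul_inv]
    have e2 : ((1:ℝ)/(1+t^2)) ^ (b-1) = ((1+t^2) ^ (b-1))⁻¹ := by
      rw [one_div, Real.inv_rpow h1t.le]
    have e3 : ((1+t^2:ℝ) ^ (a-1))⁻¹ * ((1+t^2) ^ (b-1))⁻¹ = 1+t^2 := by
      rw [← mul_inv, ← Real.rpow_add h1t, show a-1+(b-1) = (-1:ℝ) by unfold a b; ring,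
        Real.rpow_neg_one, inv_inv]
    rw [e1, e2, mul_assoc (t ^ (s-1)), e3]
    have : 2*t/(1+t^2)^2 * (t^(s-1) * (1+t^2)) = 2 * ((t * t^(s-1))/(1+t^2)) := by
      field_simp
    rw [this, hts]
  have hfin : Real.Gamma a * Real.Gamma b = ∫ t in Ioi (0:ℝ), 2 * (t ^ s / (1 + t^2)) := by
    rw [← hbeta, hcv, hrhs]
  rw [MeasureTheory.integral_const_mul] at hfin
  unfold a b at hfin
  linarith

lemma aux_main_integrable {s q : ℝ} (hs0 : 0 < s) (hs1 : s < 1) (hq : 0 < q) :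
    IntegrableOn (fun t : ℝ => t ^ s / (t^2 + q^2)) (Ioi (0:ℝ)) := by
  have hcont : Continuous (fun t : ℝ => t ^ s / (t^2 + q^2)) := by
    apply Continuous.div (Real.continuous_rpow_const hs0.le) (by continuity)
    intro t
    positivity
  rw [← Ioc_union_Ioi_eq_Ioi (zero_le_one : (0:ℝ) ≤ 1)]
  apply IntegrableOn.union
  · -- on Ioc 0 1, dominate by t^s / q^2
    have hg : IntegrableOn (fun t : ℝ => t ^ s * (q^2)⁻¹) (Ioc (0:ℝ) 1) := by
      have := (intervalIntegrable_rpow' (show (-1:ℝ) < s by linarith) (a := 0) (b := 1))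
      rw [intervalIntegrable_iff_integrableOn_Ioc_of_le zero_le_one] at this
      exact this.mul_const _
    apply Integrable.mono' hg hcont.aestronglyMeasurable.restrict
    filter_upwards [ae_restrict_mem measurableSet_Ioc] with t ht
    rw [Real.norm_eq_abs,
      abs_of_nonneg (div_nonneg (Real.rpow_nonneg ht.1.le s) (by positivity))]
    rw [div_eq_mul_inv]
    apply mul_le_mul_of_nonneg_left _ (Real.rpow_nonneg ht.1.le s)
    apply inv_anti₀ (by positivity)
    nlinarith
  · -- on Ioi 1, dominate by t^(s-2)
    have hg : IntegrableOn (fun t : ℝ => t ^ (s-2)) (Ioi (1:ℝ)) :=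
      integrableOn_Ioi_rpow_of_lt (by linarith) zero_lt_one
    apply Integrable.mono' hg hcont.aestronglyMeasurable.restrict
    filter_upwards [ae_restrict_mem measurableSet_Ioi] with t ht
    rw [mem_Ioi] at ht
    have ht0 : (0:ℝ) < t := lt_trans zero_lt_one ht
    rw [Real.norm_eq_abs,
      abs_of_nonneg (div_nonneg (Real.rpow_nonneg ht0.le s) (by positivity))]
    rw [show s - 2 = s + (-2 : ℝ) by ring, Real.rpow_add ht0, Real.rpow_neg ht0.le,
      show ((2:ℝ)) = ((2:ℕ):ℝ) by norm_num, Real.rpow_natCast]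
    rw [div_eq_mul_inv]
    apply mul_le_mul_of_nonneg_left _ (Real.rpow_nonneg ht0.le s)
    apply inv_anti₀ (by positivity)
    nlinarith

lemma aux_error_integrable {s q T : ℝ} (hs0 : 0 < s) (hq : 0 < q) (hT : 0 < T) :
    IntegrableOn (fun t : ℝ => t ^ (s-1) *
      (Real.exp (-(T*t)) * (q * Real.sin (q*T) - t * Real.cos (q*T)) / (t^2 + q^2)))
      (Ioi (0:ℝ)) ∧
    ∀ᵐ t ∂(volume.restrict (Ioi (0:ℝ))),
      ‖t ^ (s-1) * (Real.exp (-(T*t)) * (q * Real.sin (q*T) - t * Real.cos (q*T)) / (t^2 + q^2))‖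
        ≤ 3/(2*q) * (t ^ (s-1) * Real.exp (-(T*t))) := by
  have hg : IntegrableOn (fun t : ℝ => 3/(2*q) * (t ^ (s-1) * Real.exp (-(T*t)))) (Ioi (0:ℝ)) :=
    (aux_gammaKernel_integrable hs0 hT).const_mul _
  have hbd : ∀ᵐ t ∂(volume.restrict (Ioi (0:ℝ))),
      ‖t ^ (s-1) * (Real.exp (-(T*t)) * (q * Real.sin (q*T) - t * Real.cos (q*T)) / (t^2 + q^2))‖
        ≤ 3/(2*q) * (t ^ (s-1) * Real.exp (-(T*t))) := by
    filter_upwards [ae_restrict_mem measurableSet_Ioi] with t ht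
    rw [mem_Ioi] at ht
    have hden : (0:ℝ) < t^2 + q^2 := by positivity
    rw [Real.norm_eq_abs, abs_mul, abs_of_pos (Real.rpow_pos_of_pos ht _), abs_div,
      abs_of_pos hden, abs_mul, abs_of_pos (Real.exp_pos _)]
    have h1 : |q * Real.sin (q*T) - t * Real.cos (q*T)| ≤ q + t := by
      calc |q * Real.sin (q*T) - t * Real.cos (q*T)|
          ≤ |q * Real.sin (q*T)| + |t * Real.cos (q*T)| := abs_sub _ _
        _ ≤ q * 1 + t * 1 := by
            rw [abs_mul, abs_mul, abs_of_pos hq, abs_of_pos ht]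
            exact add_le_add (mul_le_mul_of_nonneg_left (Real.abs_sin_le_one _) hq.le)
              (mul_le_mul_of_nonneg_left (Real.abs_cos_le_one _) ht.le)
        _ = q + t := by ring
    have h2 : (q + t) / (t^2 + q^2) ≤ 3/(2*q) := by
      rw [div_le_div_iff₀ hden (by positivity)]
      nlinarith [sq_nonneg (t - q), sq_nonneg t]
    calc t ^ (s-1) * (Real.exp (-(T*t)) * |q * Real.sin (q*T) - t * Real.cos (q*T)| / (t^2+q^2))
        ≤ t ^ (s-1) * (Real.exp (-(T*t)) * ((q+t) / (t^2+q^2))) := by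
          apply mul_le_mul_of_nonneg_left _ (Real.rpow_nonneg ht.le _)
          rw [mul_div_assoc]
          exact mul_le_mul_of_nonneg_left ((div_le_div_iff_of_pos_right hden).mpr h1) (Real.exp_pos _).le
      _ ≤ t ^ (s-1) * (Real.exp (-(T*t)) * (3/(2*q))) := by
          apply mul_le_mul_of_nonneg_left _ (Real.rpow_nonneg ht.le _)
          exact mul_le_mul_of_nonneg_left h2 (Real.exp_pos _).le
      _ = 3/(2*q) * (t ^ (s-1) * Real.exp (-(T*t))) := by ring
  constructor
  · exact Integrable.mono' hg (by
      apply ContinuousOn.aestronglyMeasurable ?_ measurableSet_Ioi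
      apply ContinuousOn.mul
      · apply ContinuousOn.rpow_const continuousOn_id
        intro t ht
        exact Or.inl (ne_of_gt ht)
      · apply ContinuousOn.div
        · exact (Continuous.continuousOn (by continuity))
        · exact (Continuous.continuousOn (by continuity))
        · intro t _
          positivity) hbd
  · exact hbd

lemma aux_scale {s q : ℝ} (hs0 : 0 < s) (hs1 : s < 1) (hq : 0 < q) :
    ∫ t in Ioi (0:ℝ), t ^ s / (t^2 + q^2)
      = q ^ (s-1) * ∫ t in Ioi (0:ℝ), t ^ s / (1 + t^2) := by
  have h := integral_comp_mul_left_Ioi (fun t : ℝ => t^s/(t^2+q^2)) 0 hq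
  rw [mul_zero] at h
  have h2 : ∫ x in Ioi (0:ℝ), (fun t : ℝ => t^s/(t^2+q^2)) (q*x)
      = q^(s-2) * ∫ x in Ioi (0:ℝ), x^s/(1+x^2) := by
    rw [← MeasureTheory.integral_const_mul]
    apply setIntegral_congr_fun measurableSet_Ioi
    intro x hx
    rw [mem_Ioi] at hx
    simp only
    rw [Real.mul_rpow hq.le hx.le,
      show (q*x)^2 + q^2 = q^2 * (1+x^2) by ring,
      show q^(s-2) = q^s / q^(2:ℕ) by
        rw [← Real.rpow_natCast q 2, ← Real.rpow_sub hq]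
        norm_num]
    field_simp
  rw [h2, smul_eq_mul] at h
  have hq1 : q * q^(s-2) = q^(s-1) := by
    nth_rewrite 1 [← Real.rpow_one q]
    rw [← Real.rpow_add hq]
    congr 1
    ring
  field_simp at h ⊢
  rw [← hq1]
  rw [← h]
  ring

lemma aux_key {s q : ℝ} (hs0 : 0 < s) (hs1 : s < 1) (hq : 0 < q) :
    Tendsto (fun T : ℝ => ∫ x in (0:ℝ)..T, x ^ (-s) * Real.cos (q*x)) atTop
      (𝓝 ((Real.Gamma s)⁻¹ * (q^(s-1) * (Real.Gamma ((1+s)/2) * Real.Gamma ((1-s)/2) / 2)))) := by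
  set M : ℝ := ∫ t in Ioi (0:ℝ), t ^ s / (t^2 + q^2) with hM
  have hMval : M = q^(s-1) * (Real.Gamma ((1+s)/2) * Real.Gamma ((1-s)/2) / 2) := by
    rw [hM, aux_scale hs0 hs1 hq, aux_I1 hs0 hs1]
  set E : ℝ → ℝ := fun T => ∫ t in Ioi (0:ℝ), t ^ (s-1) *
      (Real.exp (-(T*t)) * (q * Real.sin (q*T) - t * Real.cos (q*T)) / (t^2 + q^2)) with hE
  have hsplit : ∀ T : ℝ, 0 < T →
      (∫ t in Ioi (0:ℝ), t ^ (s-1) *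
        ((t + Real.exp (-(T*t)) * (q * Real.sin (q*T) - t * Real.cos (q*T))) / (t^2 + q^2)))
      = M + E T := by
    intro T hT
    rw [hM, hE]
    rw [← MeasureTheory.integral_add (aux_main_integrable hs0 hs1 hq)
      (aux_error_integrable hs0 hq hT).1]
    apply setIntegral_congr_fun measurableSet_Ioi
    intro t ht
    rw [mem_Ioi] at ht
    simp only
    have hts : t ^ s = t ^ (s-1) * t := by
      rw [← Real.rpow_add_one ht.ne' (s-1)]
      norm_num
    have hden : (0:ℝ) < t^2 + q^2 := by positivity
    rw [hts]
    field_simp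
  have hAeq : ∀ᶠ T in atTop, (fun T => ∫ x in (0:ℝ)..T, x ^ (-s) * Real.cos (q*x)) T
      = (Real.Gamma s)⁻¹ * M + (Real.Gamma s)⁻¹ * E T := by
    filter_upwards [eventually_gt_atTop (0:ℝ)] with T hT
    rw [intervalIntegral.integral_of_le hT.le, aux_fubini hs0 hs1 q hT, hsplit T hT, mul_add]
  have hEbound : ∀ᶠ T in atTop, ‖E T‖ ≤ (3/(2*q) * Real.Gamma s) * T ^ (-s) := by
    filter_upwards [eventually_gt_atTop (0:ℝ)] with T hT
    have hb := norm_integral_le_of_norm_le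
      ((aux_gammaKernel_integrable hs0 hT).const_mul (3/(2*q)))
      (aux_error_integrable hs0 hq hT).2
    rw [MeasureTheory.integral_const_mul, Real.integral_rpow_mul_exp_neg_mul_Ioi hs0 hT] at hb
    rw [one_div, Real.inv_rpow hT.le, ← Real.rpow_neg hT.le] at hb
    calc ‖E T‖ ≤ 3/(2*q) * (T ^ (-s) * Real.Gamma s) := hb
      _ = (3/(2*q) * Real.Gamma s) * T ^ (-s) := by ring
  have hEtendsto : Tendsto E atTop (𝓝 0) := by
    apply squeeze_zero_norm' hEbound
    have := (tendsto_rpow_neg_atTop hs0).const_mul (3/(2*q) * Real.Gamma s)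
    simpa using this
  have hlim : Tendsto (fun T => (Real.Gamma s)⁻¹ * M + (Real.Gamma s)⁻¹ * E T) atTop
      (𝓝 ((Real.Gamma s)⁻¹ * M + (Real.Gamma s)⁻¹ * 0)) :=
    tendsto_const_nhds.add (hEtendsto.const_mul _)
  rw [mul_zero, add_zero] at hlim
  rw [← hMval]
  exact Tendsto.congr' (EventuallyEq.symm hAeq) hlim

lemma aux_symm {s : ℝ} (hs0 : 0 < s) (hs1 : s < 1) (p : ℝ) {T : ℝ} (hT : 0 ≤ T) :
    ∫ x in (-T)..T, ((|x| ^ (-s) : ℝ) : ℂ) * Complex.exp (Complex.I * p * x)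
      = 2 * ((∫ x in (0:ℝ)..T, x ^ (-s) * Real.cos (|p| * x) : ℝ) : ℂ) := by
  set f : ℝ → ℝ := fun x => |x| ^ (-s) with hf
  have hfeven : (fun x => f (-x)) = f := by
    funext x; simp only [hf, abs_neg]
  have hfr : IntervalIntegrable f volume 0 T := by
    rw [intervalIntegrable_iff_integrableOn_Ioc_of_le hT]
    apply IntegrableOn.congr_fun ?_ ?_ measurableSet_Ioc
    · exact (fun x : ℝ => x ^ (-s))
    · rw [← intervalIntegrable_iff_integrableOn_Ioc_of_le hT]
      exact intervalIntegrable_rpow' (by linarith)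
    · intro x hx
      simp only [hf, abs_of_pos hx.1]
  have hfc : IntervalIntegrable (fun x : ℝ => ((f x : ℝ) : ℂ)) volume 0 T :=
    ⟨hfr.1.ofReal, hfr.2.ofReal⟩
  have hfcneg : IntervalIntegrable (fun x : ℝ => ((f x : ℝ) : ℂ)) volume (-T) 0 := by
    have h1 := (IntervalIntegrable.iff_comp_neg).mp hfc
    rw [show (fun x : ℝ => ((f (-x) : ℝ) : ℂ)) = (fun x : ℝ => ((f x : ℝ) : ℂ)) by
      funext x; rw [show f (-x) = f x from congrFun hfeven x], neg_zero] at h1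
    exact h1.symm
  set g : ℝ → ℂ := fun x => ((f x : ℝ) : ℂ) * Complex.exp (Complex.I * p * x) with hg
  have hcont : Continuous (fun x : ℝ => Complex.exp (Complex.I * p * x)) := by
    apply Complex.continuous_exp.comp
    continuity
  have hg2 : IntervalIntegrable g volume 0 T := hfc.mul_continuousOn hcont.continuousOn
  have hg1 : IntervalIntegrable g volume (-T) 0 := hfcneg.mul_continuousOn hcont.continuousOn
  have hgneg : IntervalIntegrable (fun x => g (-x)) volume 0 T := by
    have h1 := (IntervalIntegrable.iff_comp_neg).mp hg1
    rw [neg_neg, neg_zero] at h1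
    exact h1.symm
  have hsplit : ∫ x in (-T)..T, g x = (∫ x in (-T)..(0:ℝ), g x) + ∫ x in (0:ℝ)..T, g x :=
    (integral_add_adjacent_intervals hg1 hg2).symm
  have hneg : ∫ x in (-T)..(0:ℝ), g x = ∫ x in (0:ℝ)..T, g (-x) := by
    rw [intervalIntegral.integral_comp_neg g, neg_zero]
  have hcomb : ∀ x : ℝ, g (-x) + g x = ((2 * (f x * Real.cos (p*x)) : ℝ) : ℂ) := by
    intro x
    simp only [hg]
    rw [show f (-x) = f x from congrFun hfeven x]
    have e1 : Complex.I * p * (-x:ℝ) = -(((p*x : ℝ):ℂ) * Complex.I) := by push_cast; ring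
    have e2 : Complex.I * p * (x:ℝ) = ((p*x : ℝ):ℂ) * Complex.I := by push_cast; ring
    rw [e1, e2]
    have e3 : Complex.exp (-((((p*x : ℝ)):ℂ) * Complex.I)) + Complex.exp (((p*x : ℝ):ℂ) * Complex.I)
        = 2 * Complex.cos ((p*x : ℝ):ℂ) := by
      rw [Complex.cos]
      ring
    push_cast
    push_cast at e3
    linear_combination (f x : ℂ) * e3
  calc ∫ x in (-T)..T, g x = (∫ x in (0:ℝ)..T, g (-x)) + ∫ x in (0:ℝ)..T, g x := by
        rw [hsplit, hneg]
    _ = ∫ x in (0:ℝ)..T, (g (-x) + g x) := (intervalIntegral.integral_add hgneg hg2).symm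
    _ = ∫ x in (0:ℝ)..T, ((2 * (f x * Real.cos (p*x)) : ℝ) : ℂ) := by
        apply intervalIntegral.integral_congr
        intro x _
        exact hcomb x
    _ = ((∫ x in (0:ℝ)..T, 2 * (f x * Real.cos (p*x)) : ℝ) : ℂ) := intervalIntegral.integral_ofReal
    _ = 2 * ((∫ x in (0:ℝ)..T, x ^ (-s) * Real.cos (|p| * x) : ℝ) : ℂ) := by
        rw [show (∫ x in (0:ℝ)..T, 2 * (f x * Real.cos (p*x)))
            = 2 * ∫ x in (0:ℝ)..T, x ^ (-s) * Real.cos (|p| * x) by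
          rw [← intervalIntegral.integral_const_mul]
          apply intervalIntegral.integral_congr
          intro x hx
          rw [uIcc_of_le hT] at hx
          simp only [hf]
          rw [abs_of_nonneg hx.1, show Real.cos (|p| * x) = Real.cos (p*x) by
            rw [show |p| * x = |p*x| by rw [abs_mul, abs_of_nonneg hx.1], Real.cos_abs]]]
        push_cast
        ring

end AuxStmt5

open Complex Filter

/-- Fourier transform of the power law `|x|^{−s}` on `ℝ` for `0 < s < 1`:
the symmetric improper integral `∫_{−T}^{T} |x|^{−s} e^{ipx} dx` converges as `T → ∞`
to `2^{1−s} √π (Γ((1−s)/2)/Γ(s/2)) |p|^{s−1}`. -/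
theorem stmt5 (s : ℝ) (hs : s ∈ Set.Ioo (0 : ℝ) 1) (p : ℝ) (hp : p ≠ 0) :
    Tendsto (fun T : ℝ => ∫ x in (-T)..T,
        ((|x| ^ (-s) : ℝ) : ℂ) * Complex.exp (Complex.I * p * x))
      atTop
      (nhds (((2 : ℝ) ^ (1 - s) * Real.sqrt Real.pi *
        (Real.Gamma ((1 - s) / 2) / Real.Gamma (s / 2)) * |p| ^ (s - 1) : ℝ) : ℂ)) := by
  obtain ⟨hs0, hs1⟩ := hs
  have hq : 0 < |p| := abs_pos.mpr hp
  set L : ℝ := (Real.Gamma s)⁻¹ *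
    (|p|^(s-1) * (Real.Gamma ((1+s)/2) * Real.Gamma ((1-s)/2) / 2)) with hL
  have hgamma : (2 : ℝ) ^ (1 - s) * Real.sqrt Real.pi *
      (Real.Gamma ((1 - s) / 2) / Real.Gamma (s / 2)) * |p| ^ (s - 1) = 2 * L := by
    have hdup := Real.Gamma_mul_Gamma_add_half (s/2)
    rw [show s/2 + 1/2 = (1+s)/2 by ring, show 2*(s/2) = s by ring] at hdup
    have h1 : 0 < Real.Gamma (s/2) := Real.Gamma_pos_of_pos (by linarith)
    have h2 : 0 < Real.Gamma s := Real.Gamma_pos_of_pos hs0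
    have key : Real.Gamma ((1+s)/2) = Real.Gamma s * 2^(1-s) * Real.sqrt Real.pi / Real.Gamma (s/2) := by
      rw [eq_div_iff h1.ne']
      linear_combination hdup
    rw [hL, key]
    field_simp
  have hkey := aux_key hs0 hs1 hq
  have h2 : Tendsto (fun T : ℝ => 2 * ((∫ x in (0:ℝ)..T, x ^ (-s) * Real.cos (|p| * x) : ℝ) : ℂ))
      atTop (nhds (2 * ((L : ℝ) : ℂ))) := by
    exact (((Complex.continuous_ofReal.tendsto _).comp hkey).const_mul 2)
  have heq : ∀ᶠ T : ℝ in atTop, (fun T : ℝ => ∫ x in (-T)..T,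
        ((|x| ^ (-s) : ℝ) : ℂ) * Complex.exp (Complex.I * p * x)) T
      = 2 * ((∫ x in (0:ℝ)..T, x ^ (-s) * Real.cos (|p| * x) : ℝ) : ℂ) := by
    filter_upwards [Filter.eventually_ge_atTop (0:ℝ)] with T hT
    exact aux_symm hs0 hs1 p hT
  have := Tendsto.congr' (EventuallyEq.symm heq) h2
  rw [hgamma]
  convert this using 2
  push_cast
  ring
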